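/- Let D (records) and V (predicates) be nonempty measurable spaces, let f be a trade-off function, let P be a probability measure on D, let e : D × V → {0,1} be jointly measurable, let ρ be a Markov kernel from D to V, and let ν be a probability measure on V such that for every z ∈ D the pair (ν, ρ(z)) satisfies the f-DP inequality. Then the strong predicate-singling-out success probability satisfies ∫_D ρ(z)({v ∈ V : e(z,v) = 1}) dP(z) ≤ 1 − f( sup_{v ∈ V} P({z ∈ D : e(z,v) = 1}) ). -/

import Mathlib

open MeasureTheory ProbabilityTheory

/-- A trade-off function: convex, continuous, non-increasing on `[0,1]`,
taking values in `[0,1]` with `f α ≤ 1 - α`. -/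
def IsTradeoff (f : ℝ → ℝ) : Prop :=
  ConvexOn ℝ (Set.Icc (0:ℝ) 1) f ∧ ContinuousOn f (Set.Icc (0:ℝ) 1) ∧
  AntitoneOn f (Set.Icc (0:ℝ) 1) ∧
  ∀ x ∈ Set.Icc (0:ℝ) 1, f x ∈ Set.Icc (0:ℝ) 1 ∧ f x ≤ 1 - x

/-- The pair `(P, Q)` satisfies the `f`-DP inequality: every randomized test `φ` has
`∫ φ dQ ≤ 1 - f (∫ φ dP)`. -/
def FDPIneq {Θ : Type*} [MeasurableSpace Θ] (f : ℝ → ℝ) (P Q : Measure Θ) : Prop :=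
  ∀ φ : Θ → ℝ, Measurable φ → (∀ θ, φ θ ∈ Set.Icc (0:ℝ) 1) →
    ∫ θ, φ θ ∂Q ≤ 1 - f (∫ θ, φ θ ∂P)


/-- SPSO bullet of Theorem 3: `f`-DP bound on strong predicate-singling-out success.
`e z v = true` means predicate `v` matches record `z`. -/
theorem stmt_4 {D V : Type*} [MeasurableSpace D] [MeasurableSpace V]
    [Nonempty D] [Nonempty V]
    (f : ℝ → ℝ) (hf : IsTradeoff f)
    (P : Measure D) [IsProbabilityMeasure P]
    (e : D → V → Bool) (he : Measurable (Function.uncurry e))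
    (ρ : Kernel D V) [IsMarkovKernel ρ]
    (ν : Measure V) [IsProbabilityMeasure ν]
    (hDP : ∀ z : D, FDPIneq f ν (ρ z)) :
    ∫ z, ((ρ z) {v : V | e z v = true}).toReal ∂P ≤
      1 - f (⨆ v : V, (P {z : D | e z v = true}).toReal) := by
  obtain ⟨hconv, hcont, hanti, hbd⟩ := hf
  set s : Set (D × V) := Function.uncurry e ⁻¹' {true} with hs_def
  have hs : MeasurableSet s := he (measurableSet_singleton true)
  have hAz : ∀ z : D, {v : V | e z v = true} = Prod.mk z ⁻¹' s := fun z => rfl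
  have hBv : ∀ v : V, {z : D | e z v = true} = (fun z => (z, v)) ⁻¹' s := fun v => rfl
  set g : D → ℝ := fun z => (ν (Prod.mk z ⁻¹' s)).toReal with hg_def
  have hgm : Measurable g := (measurable_measure_prodMk_left hs).ennreal_toReal
  have hgmem : ∀ z, g z ∈ Set.Icc (0:ℝ) 1 := fun z =>
    ⟨ENNReal.toReal_nonneg, by
      simpa using ENNReal.toReal_le_of_le_ofReal one_pos.le (by simpa using prob_le_one)⟩
  -- measurable comp f ∘ g
  have hfr : Measurable ((Set.Icc (0:ℝ) 1).restrict f) :=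
    (continuousOn_iff_continuous_restrict.mp hcont).measurable
  have hfg_meas : Measurable fun z => f (g z) := by
    have : (fun z => f (g z)) =
        ((Set.Icc (0:ℝ) 1).restrict f) ∘ (fun z => (⟨g z, hgmem z⟩ : Set.Icc (0:ℝ) 1)) := rfl
    rw [this]
    exact hfr.comp (hgm.subtype_mk)
  -- pointwise f-DP bound
  have step1 : ∀ z : D, ((ρ z) (Prod.mk z ⁻¹' s)).toReal ≤ 1 - f (g z) := by
    intro z
    have hA : MeasurableSet (Prod.mk z ⁻¹' s) := measurable_prodMk_left hs
    have := hDP z ((Prod.mk z ⁻¹' s).indicator 1)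
      ((measurable_one).indicator hA)
      (fun v => by
        by_cases hv : v ∈ Prod.mk z ⁻¹' s <;>
          simp [Set.indicator_apply, hv])
    rw [integral_indicator_one hA, integral_indicator_one hA] at this
    exact this
  -- integrability
  have hLm : Measurable fun z => ((ρ z) (Prod.mk z ⁻¹' s)).toReal :=
    (Kernel.measurable_kernel_prodMk_left hs).ennreal_toReal
  have hLb : ∀ z, ((ρ z) (Prod.mk z ⁻¹' s)).toReal ∈ Set.Icc (0:ℝ) 1 := fun z =>
    ⟨ENNReal.toReal_nonneg, by
      simpa using ENNReal.toReal_le_of_le_ofReal one_pos.le (by simpa using prob_le_one)⟩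
  have bdd_int : ∀ (h : D → ℝ), Measurable h → (∀ z, h z ∈ Set.Icc (0:ℝ) 1) →
      Integrable h P := by
    intro h hm hb
    refine (integrable_const (1:ℝ)).mono' hm.aestronglyMeasurable ?_
    filter_upwards with z
    rw [Real.norm_eq_abs, abs_le]
    exact ⟨le_trans (by norm_num) (hb z).1, (hb z).2⟩
  have hLint : Integrable (fun z => ((ρ z) (Prod.mk z ⁻¹' s)).toReal) P := bdd_int _ hLm hLb
  have hgint : Integrable g P := bdd_int _ hgm hgmem
  have hfgmem : ∀ z, f (g z) ∈ Set.Icc (0:ℝ) 1 := fun z => (hbd _ (hgmem z)).1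
  have hfgint : Integrable (fun z => f (g z)) P := bdd_int _ hfg_meas hfgmem
  have hFint : Integrable (fun z => 1 - f (g z)) P := (integrable_const 1).sub hfgint
  -- step 2 : integral mono
  have step2 : ∫ z, ((ρ z) (Prod.mk z ⁻¹' s)).toReal ∂P ≤ ∫ z, (1 - f (g z)) ∂P :=
    integral_mono hLint hFint step1
  -- Jensen
  have jensen : f (∫ z, g z ∂P) ≤ ∫ z, f (g z) ∂P :=
    hconv.map_integral_le hcont isClosed_Icc
      (Filter.Eventually.of_forall hgmem) hgint hfgint
  have step3 : ∫ z, (1 - f (g z)) ∂P ≤ 1 - f (∫ z, g z ∂P) := by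
    rw [integral_sub (integrable_const 1) hfgint, integral_const]
    simp only [measureReal_def, measure_univ, ENNReal.toReal_one, one_smul]
    linarith
  -- Fubini
  set S : ℝ := ⨆ v : V, (P {z : D | e z v = true}).toReal with hS_def
  have hbddS : BddAbove (Set.range fun v => (P {z : D | e z v = true}).toReal) := by
    refine ⟨1, ?_⟩
    rintro x ⟨v, rfl⟩
    simpa using ENNReal.toReal_le_of_le_ofReal one_pos.le (by simpa using prob_le_one)
  have hSmem : S ∈ Set.Icc (0:ℝ) 1 := by
    constructor
    · obtain ⟨v⟩ := (inferInstance : Nonempty V)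
      exact le_trans ENNReal.toReal_nonneg (le_ciSup hbddS v)
    · refine ciSup_le fun v => ?_
      simpa using ENNReal.toReal_le_of_le_ofReal one_pos.le (by simpa using prob_le_one)
  have hPm : Measurable fun v => (P ((fun z => (z, v)) ⁻¹' s)).toReal := by
    have : Measurable fun v => P ((fun z => (z, v)) ⁻¹' s) := by
      have hs' : MeasurableSet (Prod.swap ⁻¹' s : Set (V × D)) := measurable_swap hs
      exact measurable_measure_prodMk_left (ν := P) hs'
    exact this.ennreal_toReal
  have fubini : ∫ z, g z ∂P = ∫ v, (P ((fun z => (z, v)) ⁻¹' s)).toReal ∂ν := by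
    rw [integral_toReal (measurable_measure_prodMk_left hs).aemeasurable
        (Filter.Eventually.of_forall fun z => measure_lt_top _ _),
      integral_toReal ((by
        have hs' : MeasurableSet (Prod.swap ⁻¹' s : Set (V × D)) := measurable_swap hs
        exact measurable_measure_prodMk_left (ν := P) hs') :
          Measurable fun v => P ((fun z => (z, v)) ⁻¹' s)).aemeasurable
        (Filter.Eventually.of_forall fun v => measure_lt_top _ _)]
    congr 1
    rw [← Measure.prod_apply hs, Measure.prod_apply_symm hs]
  have step4 : ∫ z, g z ∂P ≤ S := by
    rw [fubini]
    have hle : ∀ v, (P ((fun z => (z, v)) ⁻¹' s)).toReal ≤ S := by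
      intro v
      rw [← hBv v]
      exact le_ciSup hbddS v
    calc ∫ v, (P ((fun z => (z, v)) ⁻¹' s)).toReal ∂ν ≤ ∫ (_ : V), S ∂ν := by
          refine integral_mono ((integrable_const (1:ℝ)).mono'
            hPm.aestronglyMeasurable ?_) (integrable_const S) hle
          filter_upwards with v
          rw [Real.norm_eq_abs, abs_le]
          refine ⟨le_trans (by norm_num) ENNReal.toReal_nonneg, ?_⟩
          simpa using ENNReal.toReal_le_of_le_ofReal one_pos.le (by simpa using prob_le_one)
      _ = S := by simp [measure_univ]
  have hintmem : (∫ z, g z ∂P) ∈ Set.Icc (0:ℝ) 1 := by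
    constructor
    · exact integral_nonneg fun z => (hgmem z).1
    · calc ∫ z, g z ∂P ≤ ∫ (_ : D), (1:ℝ) ∂P := integral_mono hgint (integrable_const 1)
            (fun z => (hgmem z).2)
        _ = 1 := by simp [measure_univ]
  have final : f S ≤ f (∫ z, g z ∂P) := hanti hintmem hSmem step4
  calc ∫ z, ((ρ z) {v : V | e z v = true}).toReal ∂P
      = ∫ z, ((ρ z) (Prod.mk z ⁻¹' s)).toReal ∂P := by simp only [hAz]
    _ ≤ ∫ z, (1 - f (g z)) ∂P := step2
    _ ≤ 1 - f (∫ z, g z ∂P) := step3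
    _ ≤ 1 - f S := by linarith
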